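/- If F and G are of bounded variation on [a,b] and there is no point of [a,b] at which F and G are both discontinuous, then ∫_{[a,b]} F dG + ∫_{[a,b]} G dF = F(b)G(b) - F(a-)G(a-), where F(a-), G(a-) denote left limits at a. -/

import Mathlib

open MeasureTheory Set Filter
open scoped Topology ENNReal

namespace Stmt8Aux

lemma measurable_of_countable_ne {f : ℝ → ℝ≥0∞} (h : {x | f x ≠ 0}.Countable) :
    Measurable f := by
  intro B hB
  by_cases h0 : (0 : ℝ≥0∞) ∈ B
  · have hun : f ⁻¹' B = {x | f x ≠ 0}ᶜ ∪ (f ⁻¹' B ∩ {x | f x ≠ 0}) := by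
      ext x
      by_cases hx : f x = 0
      · simp [hx, h0]
      · simp [hx]
    rw [hun]
    exact h.measurableSet.compl.union ((h.mono inter_subset_right).measurableSet)
  · have hsub : f ⁻¹' B ⊆ {x | f x ≠ 0} := by
      intro x hx h'
      rw [mem_preimage, h'] at hx
      exact h0 hx
    exact (h.mono hsub).measurableSet

lemma countable_atoms (ν : Measure ℝ) [IsFiniteMeasure ν] :
    {x : ℝ | ν {x} ≠ 0}.Countable := by
  have h := MeasureTheory.Measure.countable_meas_level_set_pos (μ := ν) (g := id) measurable_id
  refine h.mono ?_
  intro x hx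
  simp only [mem_setOf_eq] at hx ⊢
  have : {a : ℝ | id a = x} = {x} := by ext y; simp [eq_comm]
  rw [this]
  exact pos_iff_ne_zero.mpr hx

lemma measurable_atoms (ν : Measure ℝ) [IsFiniteMeasure ν] :
    Measurable fun x : ℝ => ν {x} :=
  measurable_of_countable_ne (countable_atoms ν)

lemma integrableOn_of_bounded_meas {f : ℝ → ℝ} (C : ℝ) (hf : Measurable f)
    (hC : ∀ x, |f x| ≤ C) (s : Set ℝ) (ρ : Measure ℝ) [IsFiniteMeasure ρ] :
    IntegrableOn f s ρ := by
  apply Integrable.mono' (integrable_const C) hf.aestronglyMeasurable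
  filter_upwards with x using by simpa [Real.norm_eq_abs] using hC x

lemma mono_measIcc (a : ℝ) (ν : Measure ℝ) : Monotone fun x => ν (Icc a x) :=
  fun _ _ h => measure_mono (Icc_subset_Icc_right h)

lemma integrableOn_measIcc (a b : ℝ) (μ ρ : Measure ℝ) [IsFiniteMeasure μ]
    [IsFiniteMeasure ρ] :
    IntegrableOn (fun x => (μ (Icc a x)).toReal) (Icc a b) ρ := by
  apply integrableOn_of_bounded_meas ((μ univ).toReal)
    ((mono_measIcc a μ).measurable.ennreal_toReal)
  intro x
  rw [abs_of_nonneg ENNReal.toReal_nonneg]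
  exact ENNReal.toReal_mono (measure_ne_top _ _) (measure_mono (subset_univ _))

lemma integrableOn_atom (a b : ℝ) (μ ρ : Measure ℝ) [IsFiniteMeasure μ]
    [IsFiniteMeasure ρ] :
    IntegrableOn (fun x => (μ {x}).toReal) (Icc a b) ρ := by
  apply integrableOn_of_bounded_meas ((μ univ).toReal)
    ((measurable_atoms μ).ennreal_toReal)
  intro x
  rw [abs_of_nonneg ENNReal.toReal_nonneg]
  exact ENNReal.toReal_mono (measure_ne_top _ _) (measure_mono (subset_univ _))

/-- The key Fubini identity. -/
lemma star (a b : ℝ) (μ ν : Measure ℝ) [IsFiniteMeasure μ] [IsFiniteMeasure ν] :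
    (∫ x in Icc a b, (ν (Icc a x)).toReal ∂μ) + (∫ x in Icc a b, (μ (Icc a x)).toReal ∂ν)
      = (μ (Icc a b)).toReal * (ν (Icc a b)).toReal
        + ∫ x in Icc a b, (ν {x}).toReal ∂μ := by
  have hmν : Measurable fun x => ν (Icc a x) := (mono_measIcc a ν).measurable
  have hmμ : Measurable fun x => μ (Icc a x) := (mono_measIcc a μ).measurable
  have hatν : Measurable fun x : ℝ => ν {x} := measurable_atoms ν
  set S : Set (ℝ × ℝ) := (Icc a b ×ˢ Icc a b) ∩ {p : ℝ × ℝ | p.1 ≤ p.2} with hS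
  have hSm : MeasurableSet S :=
    (measurableSet_Icc.prod measurableSet_Icc).inter
      (measurableSet_le measurable_fst measurable_snd)
  have h1 : (μ.prod ν) S = ∫⁻ x in Icc a b, ν (Icc x b) ∂μ := by
    rw [Measure.prod_apply hSm, ← lintegral_indicator measurableSet_Icc]
    congr 1; ext x
    by_cases hx : x ∈ Icc a b
    · have hpre : Prod.mk x ⁻¹' S = Icc x b := by
        ext y
        simp only [hS, mem_preimage, mem_inter_iff, mem_prod, mem_setOf_eq, mem_Icc]
        constructor
        · rintro ⟨⟨_, _, hyb⟩, hxy⟩; exact ⟨hxy, hyb⟩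
        · rintro ⟨hxy, hyb⟩; exact ⟨⟨hx, le_trans hx.1 hxy, hyb⟩, hxy⟩
      rw [hpre, indicator_of_mem hx]
    · have hpre : Prod.mk x ⁻¹' S = ∅ := by
        ext y
        simp only [hS, mem_preimage, mem_inter_iff, mem_prod, mem_setOf_eq, mem_empty_iff_false,
          iff_false, not_and]
        intro h; exact absurd h.1 hx
      rw [hpre, indicator_of_notMem hx, measure_empty]
  have h2 : (μ.prod ν) S = ∫⁻ y in Icc a b, μ (Icc a y) ∂ν := by
    rw [Measure.prod_apply_symm hSm, ← lintegral_indicator measurableSet_Icc]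
    congr 1; ext y
    by_cases hy : y ∈ Icc a b
    · have hpre : (fun x => (x, y)) ⁻¹' S = Icc a y := by
        ext x
        simp only [hS, mem_preimage, mem_inter_iff, mem_prod, mem_setOf_eq, mem_Icc]
        constructor
        · rintro ⟨⟨⟨hax, _⟩, _⟩, hxy⟩; exact ⟨hax, hxy⟩
        · rintro ⟨hax, hxy⟩; exact ⟨⟨⟨hax, le_trans hxy hy.2⟩, hy⟩, hxy⟩
      rw [hpre, indicator_of_mem hy]
    · have hpre : (fun x => (x, y)) ⁻¹' S = ∅ := by
        ext x
        simp only [hS, mem_preimage, mem_inter_iff, mem_prod, mem_setOf_eq, mem_empty_iff_false,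
          iff_false, not_and]
        intro h; exact absurd h.2 hy
      rw [hpre, indicator_of_notMem hy, measure_empty]
  have key : (∫⁻ x in Icc a b, ν (Icc a x) ∂μ) + (∫⁻ y in Icc a b, μ (Icc a y) ∂ν)
      = μ (Icc a b) * ν (Icc a b) + ∫⁻ x in Icc a b, ν {x} ∂μ := by
    rw [← h2, h1, ← lintegral_add_left hmν]
    have e2 : ∫⁻ x in Icc a b, (ν (Icc a x) + ν (Icc x b)) ∂μ
        = ∫⁻ x in Icc a b, (ν (Icc a b) + ν {x}) ∂μ := by
      apply setLIntegral_congr_fun measurableSet_Icc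
      intro x hx
      have hu : Icc a x ∪ Icc x b = Icc a b := Icc_union_Icc_eq_Icc hx.1 hx.2
      have hi : Icc a x ∩ Icc x b = {x} := by
        rw [Icc_inter_Icc, sup_eq_right.mpr hx.1, inf_eq_left.mpr hx.2, Icc_self]
      have hm := measure_union_add_inter (μ := ν) (Icc a x) (measurableSet_Icc (a := x) (b := b))
      rw [hu, hi] at hm
      exact hm.symm
    rw [e2, lintegral_add_left measurable_const, setLIntegral_const, mul_comm]
  -- finiteness
  have hbnd : ∀ (ρ κ : Measure ℝ) [IsFiniteMeasure ρ] [IsFiniteMeasure κ] (f : ℝ → ℝ≥0∞),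
      (∀ x, f x ≤ κ univ) → (∫⁻ x in Icc a b, f x ∂ρ) ≠ ⊤ := by
    intro ρ κ _ _ f hf
    have hle : (∫⁻ x in Icc a b, f x ∂ρ) ≤ κ univ * ρ (Icc a b) := by
      calc ∫⁻ x in Icc a b, f x ∂ρ ≤ ∫⁻ _ in Icc a b, κ univ ∂ρ := lintegral_mono hf
        _ = κ univ * ρ (Icc a b) := setLIntegral_const _ _
    exact ne_top_of_le_ne_top (ENNReal.mul_ne_top (measure_ne_top _ _) (measure_ne_top _ _)) hle
  have fin1 : (∫⁻ x in Icc a b, ν (Icc a x) ∂μ) ≠ ⊤ :=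
    hbnd μ ν _ (fun x => measure_mono (subset_univ _))
  have fin2 : (∫⁻ y in Icc a b, μ (Icc a y) ∂ν) ≠ ⊤ :=
    hbnd ν μ _ (fun x => measure_mono (subset_univ _))
  have fin3 : (∫⁻ x in Icc a b, ν {x} ∂μ) ≠ ⊤ :=
    hbnd μ ν _ (fun x => measure_mono (subset_univ _))
  have c1 : ∫ x in Icc a b, (ν (Icc a x)).toReal ∂μ
      = (∫⁻ x in Icc a b, ν (Icc a x) ∂μ).toReal :=
    integral_toReal hmν.aemeasurable (ae_of_all _ fun x => measure_lt_top ν _)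
  have c2 : ∫ x in Icc a b, (μ (Icc a x)).toReal ∂ν
      = (∫⁻ x in Icc a b, μ (Icc a x) ∂ν).toReal :=
    integral_toReal hmμ.aemeasurable (ae_of_all _ fun x => measure_lt_top μ _)
  have c3 : ∫ x in Icc a b, (ν {x}).toReal ∂μ
      = (∫⁻ x in Icc a b, ν {x} ∂μ).toReal :=
    integral_toReal hatν.aemeasurable (ae_of_all _ fun x => measure_lt_top ν _)
  rw [c1, c2, c3]
  have := congrArg ENNReal.toReal key
  rwa [ENNReal.toReal_add fin1 fin2,
    ENNReal.toReal_add (ENNReal.mul_ne_top (measure_ne_top _ _) (measure_ne_top _ _)) fin3,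
    ENNReal.toReal_mul] at this

lemma jump_eq_of_continuous (a b x : ℝ) (F : ℝ → ℝ) (μp μm : Measure ℝ)
    [IsFiniteMeasure μp] [IsFiniteMeasure μm]
    (hμ : ∀ x y, a ≤ x → x ≤ y → y ≤ b →
      F y - F x = (μp (Ioc x y)).toReal - (μm (Ioc x y)).toReal)
    (hax : a < x) (hxb : x ≤ b) (hc : ContinuousAt F x) :
    (μp {x}).toReal - (μm {x}).toReal = 0 := by
  set u : ℕ → ℝ := fun n => max a (x - 1 / (n + 1)) with hu
  have hux : ∀ n : ℕ, u n < x := by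
    intro n
    apply max_lt hax
    have : (0:ℝ) < 1 / (n + 1) := by positivity
    linarith
  have hau : ∀ n, a ≤ u n := fun n => le_max_left _ _
  have hmono : Monotone u := by
    intro n m hnm
    apply max_le_max le_rfl
    have h1 : (1:ℝ) / (m + 1) ≤ 1 / (n + 1) := by
      apply one_div_le_one_div_of_le (by positivity)
      linarith [(Nat.cast_le (α := ℝ)).mpr hnm]
    linarith
  have hulim : Tendsto u atTop (𝓝 x) := by
    have h1 : Tendsto (fun n : ℕ => x - 1 / (n + 1 : ℝ)) atTop (𝓝 (x - 0)) :=
      tendsto_const_nhds.sub tendsto_one_div_add_atTop_nhds_zero_nat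
    rw [sub_zero] at h1
    have h2 : Tendsto (fun n : ℕ => max a (x - 1 / (n + 1 : ℝ))) atTop (𝓝 (max a x)) :=
      tendsto_const_nhds.max h1
    rw [max_eq_right hax.le] at h2
    exact h2
  have hInt : ∀ (ρ : Measure ℝ) [IsFiniteMeasure ρ],
      Tendsto (fun n => ρ (Ioc (u n) x)) atTop (𝓝 (ρ {x})) := by
    intro ρ _
    have hanti : Antitone fun n => Ioc (u n) x := fun n m h => Ioc_subset_Ioc_left (hmono h)
    have hiInt : ⋂ n, Ioc (u n) x = {x} := by
      ext y
      simp only [mem_iInter, mem_Ioc, mem_singleton_iff]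
      constructor
      · intro h
        refine le_antisymm (h 0).2 ?_
        by_contra hlt
        push_neg at hlt
        obtain ⟨n, hn⟩ := exists_nat_one_div_lt (by linarith : (0:ℝ) < x - y)
        have h1 : x - 1 / (n + 1) ≤ u n := le_max_right _ _
        have h2 := (h n).1
        have : (1:ℝ) / (n + 1) < x - y := by exact_mod_cast hn
        linarith
      · rintro rfl
        exact fun n => ⟨hux n, le_rfl⟩
    have h := tendsto_measure_iInter_atTop (μ := ρ)
      (fun n => measurableSet_Ioc.nullMeasurableSet) hanti ⟨0, measure_ne_top _ _⟩
    rw [hiInt] at h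
    exact h
  have hFdiff : Tendsto (fun n => F x - F (u n)) atTop (𝓝 0) := by
    have h1 : Tendsto (fun n => F (u n)) atTop (𝓝 (F x)) := hc.tendsto.comp hulim
    have := (tendsto_const_nhds (x := F x) (f := atTop (α := ℕ))).sub h1
    simpa using this
  have hμdiff : Tendsto (fun n => (μp (Ioc (u n) x)).toReal - (μm (Ioc (u n) x)).toReal)
      atTop (𝓝 ((μp {x}).toReal - (μm {x}).toReal)) := by
    have h1 : Tendsto (fun n => (μp (Ioc (u n) x)).toReal) atTop (𝓝 ((μp {x}).toReal)) :=
      (ENNReal.tendsto_toReal (measure_ne_top _ _)).comp (hInt μp)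
    have h2 : Tendsto (fun n => (μm (Ioc (u n) x)).toReal) atTop (𝓝 ((μm {x}).toReal)) :=
      (ENNReal.tendsto_toReal (measure_ne_top _ _)).comp (hInt μm)
    exact h1.sub h2
  have heq : (fun n => F x - F (u n))
      = fun n => (μp (Ioc (u n) x)).toReal - (μm (Ioc (u n) x)).toReal :=
    funext fun n => hμ (u n) x (hau n) (hux n).le hxb
  rw [heq] at hFdiff
  exact (tendsto_nhds_unique hμdiff hFdiff)

lemma diag (a b : ℝ) (μFp μFm μGp μGm : Measure ℝ)
    [IsFiniteMeasure μFp] [IsFiniteMeasure μFm] [IsFiniteMeasure μGp] [IsFiniteMeasure μGm]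
    (hzero : ∀ x ∈ Icc a b, (μFp {x}).toReal - (μFm {x}).toReal = 0 ∨
      (μGp {x}).toReal - (μGm {x}).toReal = 0) :
    ∫ x in Icc a b, ((μGp {x}).toReal - (μGm {x}).toReal) ∂μFp
      = ∫ x in Icc a b, ((μGp {x}).toReal - (μGm {x}).toReal) ∂μFm := by
  set h : ℝ → ℝ := fun x => (μGp {x}).toReal - (μGm {x}).toReal with hh
  have hmeas : Measurable h :=
    ((measurable_atoms μGp).ennreal_toReal).sub ((measurable_atoms μGm).ennreal_toReal)
  set S : Set ℝ := {x | μGp {x} ≠ 0} ∪ {x | μGm {x} ≠ 0} with hS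
  have hSc : S.Countable := (countable_atoms μGp).union (countable_atoms μGm)
  have hind : ∀ x, h x = S.indicator h x := by
    intro x
    by_cases hx : x ∈ S
    · rw [indicator_of_mem hx]
    · rw [indicator_of_notMem hx]
      simp only [hS, mem_union, mem_setOf_eq, not_or, not_not] at hx
      simp [hh, hx.1, hx.2]
  have hbound : ∀ x, |h x| ≤ (μGp univ).toReal + (μGm univ).toReal := by
    intro x
    have h1 : (μGp {x}).toReal ≤ (μGp univ).toReal :=
      ENNReal.toReal_mono (measure_ne_top _ _) (measure_mono (subset_univ _))
    have h2 : (μGm {x}).toReal ≤ (μGm univ).toReal :=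
      ENNReal.toReal_mono (measure_ne_top _ _) (measure_mono (subset_univ _))
    have h3 : (0:ℝ) ≤ (μGp {x}).toReal := ENNReal.toReal_nonneg
    have h4 : (0:ℝ) ≤ (μGm {x}).toReal := ENNReal.toReal_nonneg
    rw [abs_le]
    constructor <;> simp only [hh] <;> linarith
  have key : ∀ (ρ : Measure ℝ) [IsFiniteMeasure ρ],
      ∫ x in Icc a b, h x ∂ρ = ∑' x : ↥(Icc a b ∩ S), (ρ {(x:ℝ)}).toReal • h x := by
    intro ρ _
    calc ∫ x in Icc a b, h x ∂ρ = ∫ x in Icc a b, S.indicator h x ∂ρ :=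
          integral_congr_ae (ae_of_all _ fun x => hind x)
      _ = ∫ x in Icc a b ∩ S, h x ∂ρ := setIntegral_indicator hSc.measurableSet
      _ = ∑' x : ↥(Icc a b ∩ S), (ρ {(x:ℝ)}).toReal • h x :=
          setIntegral_countable _ ((hSc.mono inter_subset_right))
            (integrableOn_of_bounded_meas _ hmeas hbound _ ρ)
  rw [key μFp, key μFm]
  apply tsum_congr
  intro x
  rcases hzero (x : ℝ) x.2.1 with hF0 | hG0
  · have : (μFp {(x:ℝ)}).toReal = (μFm {(x:ℝ)}).toReal := by linarith
    rw [this]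
  · rw [show h (x : ℝ) = 0 from hG0]
    simp

end Stmt8Aux

open Stmt8Aux

/-- Integration by parts for functions of bounded variation on the closed
interval `[a,b]`, when `F` and `G` have no common discontinuity point.
`Fam` and `Gam` are the left limits `F(a-)`, `G(a-)`; the signed measures `dF`,
`dG` are represented by Jordan decompositions whose increments match those of
`F`, `G` over half-open subintervals, with atoms `F(a) - F(a-)`, `G(a) - G(a-)`
at `a`. -/
theorem stmt8 (a b : ℝ) (hab : a < b) (F G : ℝ → ℝ)
    (hF : BoundedVariationOn F (Icc a b)) (hG : BoundedVariationOn G (Icc a b))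
    (Fam Gam : ℝ)
    (hFL : Tendsto F (nhdsWithin a (Iio a)) (nhds Fam))
    (hGL : Tendsto G (nhdsWithin a (Iio a)) (nhds Gam))
    (μFp μFm μGp μGm : Measure ℝ)
    [IsFiniteMeasure μFp] [IsFiniteMeasure μFm]
    [IsFiniteMeasure μGp] [IsFiniteMeasure μGm]
    (hμF : ∀ x y, a ≤ x → x ≤ y → y ≤ b →
      F y - F x = (μFp (Ioc x y)).toReal - (μFm (Ioc x y)).toReal)
    (hμG : ∀ x y, a ≤ x → x ≤ y → y ≤ b →
      G y - G x = (μGp (Ioc x y)).toReal - (μGm (Ioc x y)).toReal)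
    (hμFa : F a - Fam = (μFp {a}).toReal - (μFm {a}).toReal)
    (hμGa : G a - Gam = (μGp {a}).toReal - (μGm {a}).toReal)
    (hnocommon : ∀ x ∈ Icc a b, ContinuousAt F x ∨ ContinuousAt G x) :
    ((∫ x in Icc a b, F x ∂μGp) - (∫ x in Icc a b, F x ∂μGm))
      + ((∫ x in Icc a b, G x ∂μFp) - (∫ x in Icc a b, G x ∂μFm))
      = F b * G b - Fam * Gam := by
  -- splitting Icc a y into {a} and Ioc a y
  have hIccμ : ∀ (μ : Measure ℝ) [IsFiniteMeasure μ], ∀ y, a ≤ y →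
      (μ (Icc a y)).toReal = (μ {a}).toReal + (μ (Ioc a y)).toReal := by
    intro μ _ y hy
    have hset : Icc a y = {a} ∪ Ioc a y := by
      rw [singleton_union, Ioc_insert_left hy]
    have hdisj : Disjoint ({a} : Set ℝ) (Ioc a y) := by
      simp [Set.disjoint_singleton_left]
    rw [hset, measure_union hdisj measurableSet_Ioc,
      ENNReal.toReal_add (measure_ne_top _ _) (measure_ne_top _ _)]
  have hFdec : ∀ y ∈ Icc a b,
      F y = Fam + ((μFp (Icc a y)).toReal - (μFm (Icc a y)).toReal) := by
    intro y hy
    have h1 := hμF a y le_rfl hy.1 hy.2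
    have e1 := hIccμ μFp y hy.1
    have e2 := hIccμ μFm y hy.1
    linarith [hμFa]
  have hGdec : ∀ y ∈ Icc a b,
      G y = Gam + ((μGp (Icc a y)).toReal - (μGm (Icc a y)).toReal) := by
    intro y hy
    have h1 := hμG a y le_rfl hy.1 hy.2
    have e1 := hIccμ μGp y hy.1
    have e2 := hIccμ μGm y hy.1
    linarith [hμGa]
  -- expansion of the four integrals
  have expand : ∀ (H : ℝ → ℝ) (Ham : ℝ) (μp μm ρ : Measure ℝ)
      [IsFiniteMeasure μp] [IsFiniteMeasure μm] [IsFiniteMeasure ρ],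
      (∀ y ∈ Icc a b, H y = Ham + ((μp (Icc a y)).toReal - (μm (Icc a y)).toReal)) →
      ∫ x in Icc a b, H x ∂ρ = Ham * (ρ (Icc a b)).toReal
        + ((∫ x in Icc a b, (μp (Icc a x)).toReal ∂ρ)
          - ∫ x in Icc a b, (μm (Icc a x)).toReal ∂ρ) := by
    intro H Ham μp μm ρ _ _ _ hdec
    have h1 : ∫ x in Icc a b, H x ∂ρ
        = ∫ x in Icc a b,
            (Ham + ((μp (Icc a x)).toReal - (μm (Icc a x)).toReal)) ∂ρ :=
      setIntegral_congr_fun measurableSet_Icc fun x hx => hdec x hx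
    have hsub : IntegrableOn
        (fun x => (μp (Icc a x)).toReal - (μm (Icc a x)).toReal) (Icc a b) ρ :=
      (integrableOn_measIcc a b μp ρ).sub (integrableOn_measIcc a b μm ρ)
    rw [h1]
    calc ∫ x in Icc a b,
          (Ham + ((μp (Icc a x)).toReal - (μm (Icc a x)).toReal)) ∂ρ
        = (∫ _x in Icc a b, Ham ∂ρ)
          + ∫ x in Icc a b, ((μp (Icc a x)).toReal - (μm (Icc a x)).toReal) ∂ρ :=
          integral_add (integrable_const _) hsub
      _ = (∫ _x in Icc a b, Ham ∂ρ)
          + ((∫ x in Icc a b, (μp (Icc a x)).toReal ∂ρ)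
            - ∫ x in Icc a b, (μm (Icc a x)).toReal ∂ρ) := by
          rw [integral_sub (integrableOn_measIcc a b μp ρ) (integrableOn_measIcc a b μm ρ)]
      _ = Ham * (ρ (Icc a b)).toReal
          + ((∫ x in Icc a b, (μp (Icc a x)).toReal ∂ρ)
            - ∫ x in Icc a b, (μm (Icc a x)).toReal ∂ρ) := by
          rw [setIntegral_const, smul_eq_mul, mul_comm, measureReal_def]
  have e1 := expand F Fam μFp μFm μGp hFdec
  have e2 := expand F Fam μFp μFm μGm hFdec
  have e3 := expand G Gam μGp μGm μFp hGdec
  have e4 := expand G Gam μGp μGm μFm hGdec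
  have s1 := star a b μFp μGp
  have s2 := star a b μFp μGm
  have s3 := star a b μFm μGp
  have s4 := star a b μFm μGm
  -- no common jumps
  have hzero : ∀ x ∈ Icc a b, (μFp {x}).toReal - (μFm {x}).toReal = 0 ∨
      (μGp {x}).toReal - (μGm {x}).toReal = 0 := by
    intro x hx
    rcases hnocommon x hx with hFc | hGc
    · left
      rcases eq_or_lt_of_le hx.1 with heq | hax
      · subst heq
        have hunq : Fam = F a :=
          tendsto_nhds_unique hFL (hFc.tendsto.mono_left nhdsWithin_le_nhds)
        linarith [hμFa]
      · exact jump_eq_of_continuous a b x F μFp μFm hμF hax hx.2 hFc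
    · right
      rcases eq_or_lt_of_le hx.1 with heq | hax
      · subst heq
        have hunq : Gam = G a :=
          tendsto_nhds_unique hGL (hGc.tendsto.mono_left nhdsWithin_le_nhds)
        linarith [hμGa]
      · exact jump_eq_of_continuous a b x G μGp μGm hμG hax hx.2 hGc
  have dd : (∫ x in Icc a b, (μGp {x}).toReal ∂μFp)
      - (∫ x in Icc a b, (μGm {x}).toReal ∂μFp)
      - ((∫ x in Icc a b, (μGp {x}).toReal ∂μFm)
        - (∫ x in Icc a b, (μGm {x}).toReal ∂μFm)) = 0 := by
    have h := diag a b μFp μFm μGp μGm hzero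
    rw [integral_sub (integrableOn_atom a b μGp μFp) (integrableOn_atom a b μGm μFp),
      integral_sub (integrableOn_atom a b μGp μFm) (integrableOn_atom a b μGm μFm)] at h
    linarith
  have hPM : F b = Fam + ((μFp (Icc a b)).toReal - (μFm (Icc a b)).toReal) :=
    hFdec b ⟨hab.le, le_rfl⟩
  have hQN : G b = Gam + ((μGp (Icc a b)).toReal - (μGm (Icc a b)).toReal) :=
    hGdec b ⟨hab.le, le_rfl⟩
  rw [e1, e2, e3, e4, hPM, hQN]
  linear_combination s1 + s4 - s2 - s3 + dd
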